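/- Let n ≥ 1 and let k_1, …, k_n be positive integers; write W(a) = χ_{k_1}∘χ_{k_2}∘⋯∘χ_{k_n}(a) for a ∈ {1,2,3}. Then: (i) W(3) is a prefix of W(2); (ii) if k_n ≥ 2, then W(1) with its last letter removed is a prefix of W(3), and the last letter of W(1) equals 1 if n is even and equals 2 if n is odd; (iii) if k_n = 1 and n ≥ 2, then W(3) is a prefix of W(1). -/

import Mathlib

open Filter Topology MeasureTheory

/-- The substitution `χ_k` on the alphabet `{1,2,3}`, coded as `Fin 3 = {0,1,2}`
(letter 1 ↦ 0, letter 2 ↦ 1, letter 3 ↦ 2):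
`χ_k(1) = 2`, `χ_k(2) = 3 1^k`, `χ_k(3) = 3 1^(k-1)`. -/
def chiSub (k : ℕ) : Fin 3 → List (Fin 3) :=
  ![[1], 2 :: List.replicate k 0, 2 :: List.replicate (k - 1) 0]

/-- Extension of `χ_k` to finite words by concatenation. -/
def applyChi (k : ℕ) (w : List (Fin 3)) : List (Fin 3) := w.flatMap (chiSub k)

/-- `compApply k n w = χ_{k 1} ∘ χ_{k 2} ∘ ⋯ ∘ χ_{k n} (w)`. -/
def compApply (k : ℕ → ℕ) : ℕ → List (Fin 3) → List (Fin 3)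
  | 0, w => w
  | n + 1, w => compApply k n (applyChi (k (n + 1)) w)

/-- Condition (★): k_{2i} > 1` for infinitely many `i` and `k_{2i-1} > 1`
for infinitely many `i`. -/
def StarCond (k : ℕ → ℕ) : Prop :=
  (∀ N, ∃ i ≥ N, 1 < k (2 * i)) ∧ (∀ N, ∃ i ≥ N, 1 < k (2 * i - 1))

/-- `w` is a prefix of the infinite sequence `x`. -/
def IsPrefixSeq (w : List (Fin 3)) (x : ℕ → Fin 3) : Prop :=
  w = List.ofFn fun i : Fin w.length => x i

/-- The left shift `σ`. -/
def shift (x : ℕ → Fin 3) : ℕ → Fin 3 := fun i => x (i + 1)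

/-- The closure of the `σ`-orbit of `ρ`: the subshift `X`. -/
def orbitClosure (ρ : ℕ → Fin 3) : Set (ℕ → Fin 3) :=
  closure {y | ∃ n : ℕ, y = fun i => ρ (i + n)}

lemma compApply_append (k : ℕ → ℕ) : ∀ (n : ℕ) (u v : List (Fin 3)),
    compApply k n (u ++ v) = compApply k n u ++ compApply k n v
  | 0, u, v => rfl
  | n+1, u, v => by
    show compApply k n (applyChi _ (u ++ v)) = _
    rw [show applyChi (k (n+1)) (u ++ v)
        = applyChi (k (n+1)) u ++ applyChi (k (n+1)) v from List.flatMap_append]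
    exact compApply_append k n _ _

lemma compApply_nil (k : ℕ → ℕ) : ∀ n : ℕ, compApply k n [] = []
  | 0 => rfl
  | n+1 => compApply_nil k n

lemma compApply_single (k : ℕ → ℕ) (n : ℕ) (a : Fin 3) :
    compApply k (n+1) [a] = compApply k n (chiSub (k (n+1)) a) := by
  show compApply k n (applyChi _ [a]) = _
  simp [applyChi]

lemma compApply_ne_nil (k : ℕ → ℕ) : ∀ (n : ℕ) (a : Fin 3), compApply k n [a] ≠ []
  | 0, a => by simp [compApply]
  | n+1, a => by
    rw [compApply_single]
    fin_cases a
    · show compApply k n [1] ≠ []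
      exact compApply_ne_nil k n 1
    · show compApply k n ([2] ++ List.replicate (k (n+1)) 0) ≠ []
      rw [compApply_append]
      intro h
      exact compApply_ne_nil k n 2 (List.append_eq_nil_iff.mp h).1
    · show compApply k n ([2] ++ List.replicate (k (n+1) - 1) 0) ≠ []
      rw [compApply_append]
      intro h
      exact compApply_ne_nil k n 2 (List.append_eq_nil_iff.mp h).1

lemma A_eq (k : ℕ → ℕ) (m : ℕ) : compApply k (m+1) [0] = compApply k m [1] := by
  rw [compApply_single]; rfl

/-- `B_{m+1} = C_{m+1} ++ A_m`. -/
lemma B_eq (k : ℕ → ℕ) (m : ℕ) (hk : 1 ≤ k (m+1)) :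
    compApply k (m+1) [1] = compApply k (m+1) [2] ++ compApply k m [0] := by
  rw [compApply_single, compApply_single]
  obtain ⟨j, hj⟩ : ∃ j, k (m+1) = j + 1 := ⟨k (m+1) - 1, (Nat.succ_pred_eq_of_pos hk).symm⟩
  rw [show chiSub (k (m+1)) 1 = chiSub (k (m+1)) 2 ++ [0] by
    simp [chiSub, hj, List.replicate_succ']]
  rw [compApply_append]

/-- `C_{m+1} = C_m ++ (image of `1^{K-1}`)`. -/
lemma C_eq (k : ℕ → ℕ) (m : ℕ) :
    compApply k (m+1) [2]
      = compApply k m [2] ++ compApply k m (List.replicate (k (m+1) - 1) 0) := by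
  rw [compApply_single]
  rw [show chiSub (k (m+1)) 2 = [2] ++ List.replicate (k (m+1) - 1) 0 from rfl]
  rw [compApply_append]

/-- `B_{m+1} = C_m ++ (A_m ++ rest)`. -/
lemma B_eq2 (k : ℕ → ℕ) (m : ℕ) (hk : 1 ≤ k (m+1)) :
    compApply k (m+1) [1] = compApply k m [2] ++ (compApply k m [0]
      ++ compApply k m (List.replicate (k (m+1) - 1) 0)) := by
  rw [compApply_single]
  obtain ⟨j, hj⟩ : ∃ j, k (m+1) = j + 1 := ⟨k (m+1) - 1, (Nat.succ_pred_eq_of_pos hk).symm⟩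
  rw [show chiSub (k (m+1)) 1 = [2] ++ ([0] ++ List.replicate (k (m+1) - 1) 0) by
    simp [chiSub, hj, List.replicate_succ]]
  rw [compApply_append, compApply_append]

/-- Key lemma: `A_m` minus its last letter is a prefix of `B_m`, and the last letter
of `A_m` is `0` if `m` even, `1` if odd. -/
lemma keyP (k : ℕ → ℕ) (hpos : ∀ i, 1 ≤ i → 1 ≤ k i) : ∀ m : ℕ,
    ((compApply k m [0]).dropLast <+: compApply k m [1]) ∧
    (compApply k m [0]).getLast? = some (if Even m then (0 : Fin 3) else 1)
  | 0 => by simp [compApply]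
  | 1 => by
    constructor
    · rw [A_eq]; simp [compApply]
    · rw [A_eq]; simp [compApply, Nat.even_iff]
  | (m+2) => by
    have ihP := (keyP k hpos m).1
    have ihL := (keyP k hpos m).2
    have hA : compApply k (m+2) [0] = compApply k (m+1) [2] ++ compApply k m [0] := by
      rw [A_eq, B_eq k m (hpos _ (Nat.le_add_left 1 m))]
    have hAne := compApply_ne_nil k m 0
    constructor
    · rw [hA, B_eq2 k (m+1) (hpos _ (by omega)), List.dropLast_append,
        if_neg (by simpa using hAne)]
      rw [List.prefix_append_right_inj, A_eq]
      exact ihP.trans (List.prefix_append _ _)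
    · rw [hA, List.getLast?_append, ihL]
      have hev : Even (m+2) ↔ Even m :=
        ⟨fun ⟨r, hr⟩ => ⟨r - 1, by omega⟩, fun ⟨r, hr⟩ => ⟨r + 1, by omega⟩⟩
      simp [Option.or, hev]

/-- writing `W(a) = χ_{k_1} ∘ ⋯ ∘ χ_{k_n}(a)` (letters 1,2,3 coded as
`0,1,2 : Fin 3`):
(i) `W(3)` is a prefix of `W(2)`;
(ii) if `k_n ≥ 2` then `W(1)` minus its last letter is a prefix of `W(3)`, and the
last letter of `W(1)` is `1` if `n` is even and `2` if `n` is odd;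
(iii) if `k_n = 1` and `n ≥ 2` then `W(3)` is a prefix of `W(1)`. -/
theorem statement18 (k : ℕ → ℕ) (hpos : ∀ i, 1 ≤ i → 1 ≤ k i) (n : ℕ) (hn : 1 ≤ n) :
    (compApply k n [2]) <+: (compApply k n [1]) ∧
    (2 ≤ k n →
      (compApply k n [0]).dropLast <+: (compApply k n [2]) ∧
      (compApply k n [0]).getLast? =
        some (if Even n then (0 : Fin 3) else (1 : Fin 3))) ∧
    (k n = 1 → 2 ≤ n → (compApply k n [2]) <+: (compApply k n [0])) := by
  obtain ⟨m, rfl⟩ : ∃ m, n = m + 1 := ⟨n - 1, by omega⟩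
  refine ⟨?_, fun hk2 => ⟨?_, (keyP k hpos (m+1)).2⟩, fun hk1 hn2 => ?_⟩
  · rw [B_eq k m (hpos _ (by omega))]
    exact List.prefix_append _ _
  · -- (ii) dropLast part
    match m with
    | 0 =>
      rw [A_eq]
      simp [compApply]
    | (i+1) =>
      have hA : compApply k (i+2) [0] = compApply k (i+1) [2] ++ compApply k i [0] := by
        rw [A_eq, B_eq k i (hpos _ (Nat.le_add_left 1 i))]
      rw [hA, C_eq k (i+1), List.dropLast_append,
        if_neg (by simpa using compApply_ne_nil k i 0), List.prefix_append_right_inj]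
      obtain ⟨j, hj⟩ : ∃ j, k (i+1+1) - 1 = j + 1 := ⟨k (i+1+1) - 2, by omega⟩
      rw [hj, show (List.replicate (j+1) (0 : Fin 3)) = [0] ++ List.replicate j 0 from
        rfl, compApply_append, A_eq]
      exact (keyP k hpos i).1.trans (List.prefix_append _ _)
  · -- (iii)
    obtain ⟨i, rfl⟩ : ∃ i, m = i + 1 := ⟨m - 1, by omega⟩
    have hA : compApply k (i+2) [0] = compApply k (i+1) [2] ++ compApply k i [0] := by
      rw [A_eq, B_eq k i (hpos _ (Nat.le_add_left 1 i))]
    rw [hA, C_eq k (i+1), hk1]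
    simp only [Nat.sub_self, List.replicate_zero, compApply_nil, List.append_nil]
    exact List.prefix_append _ _
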